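/- Let ι and κ be finite nonempty types, let g : ι → κ be a surjection, let F be the induced linear projection, and let J ⊊ κ be a nonempty proper subset. Define Ω = {x ∈ stdSimplex ℝ ι | (∀ j, 0 < (F x) j) or (∀ j, 0 < (F x) j ↔ j ∈ J)} and Σ = {x ∈ Ω | ∀ j, 0 < (F x) j ↔ j ∈ J}. Then Σ is a strong deformation retract of Ω: there exists a continuous map H : Ω × [0,1] → Ω with H(x,0) = x for all x ∈ Ω, H(x,1) ∈ Σ for all x ∈ Ω, and H(x,u) = x for all x ∈ Σ and all u ∈ [0,1]. -/

import Mathlib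

open Finset

open Classical in
/-- Mass outside the fibers of `J`. -/
noncomputable def auxT {ι κ : Type*} [Fintype ι] (g : ι → κ) (J : Set κ)
    (x : ι → ℝ) : ℝ :=
  ∑ i ∈ Finset.univ.filter (fun i => g i ∉ J), x i

open Classical in
/-- The homotopy formula. -/
noncomputable def auxH {ι κ : Type*} [Fintype ι] (g : ι → κ) (J : Set κ)
    (x : ι → ℝ) (u : ℝ) : ι → ℝ :=
  fun i => x i * (if g i ∈ J then 1 else 1 - u) / (1 - u * auxT g J x)

/-- Single-simplex star retraction. With `Ω` the preimage under the
induced projection of the union of the open top simplex and the open face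
determined by a nonempty proper subset `J ⊊ κ`, and `SJ` the preimage of the open
face, `SJ` is a strong deformation retract of `Ω`. -/
theorem preimage_star_deformation_retracts
    {ι κ : Type*} [Fintype ι] [Fintype κ] [Nonempty ι] [Nonempty κ] [DecidableEq κ]
    (g : ι → κ) (hg : Function.Surjective g)
    (F : (ι → ℝ) → (κ → ℝ))
    (hF : ∀ x j, F x j = ∑ i ∈ Finset.univ.filter (fun i => g i = j), x i)
    (J : Set κ) (hJne : J.Nonempty) (hJprop : J ≠ Set.univ)
    (Ω : Set (ι → ℝ))
    (hΩ : Ω = {x ∈ stdSimplex ℝ ι | (∀ j, 0 < F x j) ∨ (∀ j, 0 < F x j ↔ j ∈ J)})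
    (SJ : Set (ι → ℝ))
    (hSJ : SJ = {x ∈ Ω | ∀ j, 0 < F x j ↔ j ∈ J}) :
    ∃ H : (Ω × unitInterval) → Ω,
      Continuous H ∧
      (∀ x : Ω, H (x, 0) = x) ∧
      (∀ x : Ω, ((H (x, 1) : ι → ℝ)) ∈ SJ) ∧
      (∀ x : Ω, (x : ι → ℝ) ∈ SJ → ∀ u : unitInterval, H (x, u) = x) := by
  classical
  subst hΩ hSJ
  set t : (ι → ℝ) → ℝ := auxT g J with ht_def
  -- basic facts
  have hF0 : ∀ x : ι → ℝ, x ∈ stdSimplex ℝ ι → ∀ j, 0 ≤ F x j := by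
    intro x hx j
    rw [hF]
    exact Finset.sum_nonneg fun i _ => hx.1 i
  have htsum : ∀ x : ι → ℝ,
      t x = ∑ j ∈ Finset.univ.filter (fun j => j ∉ J), F x j := by
    intro x
    simp only [hF]
    rw [Finset.sum_fiberwise_eq_sum_filter]
    rw [ht_def, auxT]
    apply Finset.sum_congr
    · ext i; simp
    · intros; rfl
  have hsum1 : ∀ x : ι → ℝ, x ∈ stdSimplex ℝ ι → ∑ j, F x j = 1 := by
    intro x hx
    simp only [hF]
    rw [Finset.sum_fiberwise_eq_sum_filter]
    simpa using hx.2
  have ht0 : ∀ x : ι → ℝ, x ∈ stdSimplex ℝ ι → 0 ≤ t x := by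
    intro x hx
    rw [ht_def, auxT]
    exact Finset.sum_nonneg fun i _ => hx.1 i
  -- for x ∈ Ω, coordinates in J are positive
  have hΩpos : ∀ x ∈ {x ∈ stdSimplex ℝ ι |
      (∀ j, 0 < F x j) ∨ (∀ j, 0 < F x j ↔ j ∈ J)}, ∀ j ∈ J, 0 < F x j := by
    rintro x ⟨_, h | h⟩ j hj
    · exact h j
    · exact (h j).mpr hj
  have ht1 : ∀ x ∈ {x ∈ stdSimplex ℝ ι |
      (∀ j, 0 < F x j) ∨ (∀ j, 0 < F x j ↔ j ∈ J)}, t x < 1 := by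
    intro x hx
    obtain ⟨j0, hj0⟩ := hJne
    have hsplit : (∑ j ∈ Finset.univ.filter (fun j => j ∈ J), F x j)
        + ∑ j ∈ Finset.univ.filter (fun j => ¬ j ∈ J), F x j = 1 := by
      rw [Finset.sum_filter_add_sum_filter_not]
      exact hsum1 x hx.1
    have hpos : 0 < ∑ j ∈ Finset.univ.filter (fun j => j ∈ J), F x j := by
      refine lt_of_lt_of_le (hΩpos x hx j0 hj0) ?_
      exact Finset.single_le_sum (fun j _ => hF0 x hx.1 j)
        (by simp [hj0])
    rw [htsum]
    linarith
  -- denominator positive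
  have hd : ∀ x ∈ {x ∈ stdSimplex ℝ ι |
      (∀ j, 0 < F x j) ∨ (∀ j, 0 < F x j ↔ j ∈ J)}, ∀ u : ℝ, 0 ≤ u → u ≤ 1 →
      0 < 1 - u * t x := by
    intro x hx u hu0 hu1
    have h1 : u * t x ≤ t x := by
      nlinarith [ht0 x hx.1]
    have := ht1 x hx
    linarith
  -- formula for F of the homotopy
  have hFh : ∀ x : ι → ℝ, ∀ u : ℝ, ∀ j,
      F (auxH g J x u) j = F x j * (if j ∈ J then 1 else 1 - u) / (1 - u * t x) := by
    intro x u j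
    rw [hF, hF]
    have hco : ∀ i ∈ Finset.univ.filter (fun i => g i = j), auxH g J x u i
        = x i * (if j ∈ J then 1 else 1 - u) / (1 - u * t x) := by
      intro i hi
      have hgi : g i = j := by simpa using hi
      simp only [auxH, hgi, ← ht_def]
    rw [Finset.sum_congr rfl hco, ← Finset.sum_div, ← Finset.sum_mul]
  -- homotopy lands in Ω
  have hmem : ∀ x ∈ {x ∈ stdSimplex ℝ ι |
      (∀ j, 0 < F x j) ∨ (∀ j, 0 < F x j ↔ j ∈ J)}, ∀ u : ℝ, 0 ≤ u → u ≤ 1 →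
      auxH g J x u ∈ {x ∈ stdSimplex ℝ ι |
      (∀ j, 0 < F x j) ∨ (∀ j, 0 < F x j ↔ j ∈ J)} := by
    intro x hx u hu0 hu1
    have hdpos := hd x hx u hu0 hu1
    constructor
    · constructor
      · intro i
        apply div_nonneg
        · apply mul_nonneg (hx.1.1 i)
          split <;> linarith
        · linarith
      · -- sum is 1
        simp only [auxH, ← ht_def]
        rw [← Finset.sum_div]
        have hsplit : ∑ i, x i * (if g i ∈ J then 1 else 1 - u)
            = (∑ i ∈ Finset.univ.filter (fun i => g i ∈ J), x i)
              + (1 - u) * t x := by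
          rw [← Finset.sum_filter_add_sum_filter_not Finset.univ (fun i => g i ∈ J)]
          congr 1
          · apply Finset.sum_congr rfl; intro i hi
            simp only [Finset.mem_filter] at hi
            simp [hi.2]
          · rw [ht_def, auxT, Finset.mul_sum]
            apply Finset.sum_congr rfl; intro i hi
            simp only [Finset.mem_filter] at hi
            simp [hi.2, mul_comm]
        have hin : (∑ i ∈ Finset.univ.filter (fun i => g i ∈ J), x i) = 1 - t x := by
          have := Finset.sum_filter_add_sum_filter_not Finset.univ
            (fun i => g i ∈ J) x
          rw [hx.1.2] at this
          rw [ht_def, auxT]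
          have heq : (Finset.univ.filter (fun i => ¬ g i ∈ J))
              = (Finset.univ.filter (fun i => g i ∉ J)) := by
            apply Finset.filter_congr; intros; rfl
          rw [← heq]
          linarith
        rw [hsplit, hin]
        rw [div_eq_one_iff_eq hdpos.ne']
        ring
    · -- positivity pattern
      by_cases hu : u = 1
      · right
        intro j
        rw [hFh, hu]
        by_cases hj : j ∈ J
        · simp only [hj, if_true, iff_true]
          rw [hu] at hdpos
          exact div_pos (by rw [mul_one]; exact hΩpos x hx j hj) hdpos
        · simp [hj]
      · have hu1' : u < 1 := lt_of_le_of_ne hu1 hu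
        rcases hx.2 with hx2 | hx2
        · left
          intro j
          rw [hFh]
          apply div_pos _ hdpos
          apply mul_pos (hx2 j)
          split <;> linarith
        · right
          intro j
          rw [hFh]
          by_cases hj : j ∈ J
          · simp only [hj, if_true, iff_true, mul_one]
            exact div_pos ((hx2 j).mpr hj) hdpos
          · have : F x j = 0 := by
              have h1 := hF0 x hx.1 j
              have h2 : ¬ 0 < F x j := fun h => hj ((hx2 j).mp h)
              linarith
            simp [hj, this]
  -- define H
  refine ⟨fun p => ⟨auxH g J p.1.1 p.2.1, hmem p.1.1 p.1.2 p.2.1 p.2.2.1 p.2.2.2⟩,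
    ?_, ?_, ?_, ?_⟩
  · -- continuity
    apply Continuous.subtype_mk
    apply continuous_pi
    intro i
    have hx : Continuous fun p : ({x ∈ stdSimplex ℝ ι |
        (∀ j, 0 < F x j) ∨ (∀ j, 0 < F x j ↔ j ∈ J)} × unitInterval) =>
        (p.1 : ι → ℝ) := continuous_subtype_val.comp continuous_fst
    have hu : Continuous fun p : ({x ∈ stdSimplex ℝ ι |
        (∀ j, 0 < F x j) ∨ (∀ j, 0 < F x j ↔ j ∈ J)} × unitInterval) =>
        (p.2 : ℝ) := continuous_subtype_val.comp continuous_snd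
    have ht : Continuous fun p : ({x ∈ stdSimplex ℝ ι |
        (∀ j, 0 < F x j) ∨ (∀ j, 0 < F x j ↔ j ∈ J)} × unitInterval) =>
        t (p.1 : ι → ℝ) := by
      simp only [ht_def, auxT]
      apply continuous_finset_sum
      intro i _
      exact (continuous_apply i).comp hx
    simp only [auxH, ← ht_def]
    apply Continuous.div
    · apply Continuous.mul ((continuous_apply i).comp hx)
      split
      · exact continuous_const
      · exact continuous_const.sub hu
    · exact continuous_const.sub (hu.mul ht)
    · intro p
      have := hd p.1.1 p.1.2 p.2.1 p.2.2.1 p.2.2.2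
      intro h; rw [h] at this; exact lt_irrefl 0 this
  · -- H(x,0) = x
    intro x
    apply Subtype.ext
    simp only
    funext i
    simp only [auxH]
    norm_num
  · -- H(x,1) ∈ SJ
    intro x
    refine ⟨hmem x.1 x.2 1 zero_le_one le_rfl, ?_⟩
    intro j
    have hdpos := hd x.1 x.2 (1 : ℝ) zero_le_one le_rfl
    rw [hFh]
    by_cases hj : j ∈ J
    · simp only [hj, if_true, iff_true, mul_one]
      exact div_pos (hΩpos x.1 x.2 j hj) hdpos
    · simp [hj]
  · -- fixed on SJ
    intro x hx u
    apply Subtype.ext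
    simp only
    funext i
    have ht0' : t x.1 = 0 := by
      rw [htsum]
      apply Finset.sum_eq_zero
      intro j hj
      simp only [Finset.mem_filter] at hj
      have h1 := hF0 x.1 x.2.1 j
      have h2 : ¬ 0 < F x.1 j := fun h => hj.2 ((hx.2 j).mp h)
      linarith
    by_cases hgi : g i ∈ J
    · simp [auxH, ← ht_def, ht0', hgi]
    · have hxi : x.1 i = 0 := by
        have h1 : x.1 i ≤ t x.1 := by
          rw [ht_def, auxT]
          exact Finset.single_le_sum (fun k _ => x.2.1.1 k) (by simp [hgi])
        have := x.2.1.1 i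
        linarith
      simp [auxH, ← ht_def, ht0', hgi, hxi]
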